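/- Let X be a real m×n matrix, 0 < r ≤ min(m,n), and λ ≥ 0. Then the infimum over m×r matrices A and n×r matrices B of (1/2)‖X − ABᵀ‖_F² + (λ/2)(‖A‖_F² + ‖B‖_F²) equals the infimum over m×n matrices Z with rank(Z) ≤ r of (1/2)‖X − Z‖_F² + λ‖Z‖_*. -/

import Mathlib

noncomputable section

open Matrix

/-- Squared Frobenius norm of a real matrix. -/
def frobSq {m n : ℕ} (M : Matrix (Fin m) (Fin n) ℝ) : ℝ := ∑ i, ∑ j, (M i j) ^ 2

/-- Nuclear norm: sum of the singular values, i.e. of the square roots of the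
eigenvalues of `Zᴴ * Z`. -/
def nuclearNorm {m n : ℕ} (Z : Matrix (Fin m) (Fin n) ℝ) : ℝ :=
  ∑ i, Real.sqrt ((Matrix.isHermitian_conjTranspose_mul_self Z).eigenvalues i)

lemma frobSq_eq_trace {m n : ℕ} (M : Matrix (Fin m) (Fin n) ℝ) :
    frobSq M = (Mᵀ * M).trace := by
  simp only [frobSq, Matrix.trace, Matrix.diag, Matrix.mul_apply, Matrix.transpose_apply, sq]
  exact Finset.sum_comm

lemma frobSq_nonneg {m n : ℕ} (M : Matrix (Fin m) (Fin n) ℝ) : 0 ≤ frobSq M :=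
  Finset.sum_nonneg fun _ _ => Finset.sum_nonneg fun _ _ => sq_nonneg _

lemma frobSq_transpose {m n : ℕ} (M : Matrix (Fin m) (Fin n) ℝ) : frobSq Mᵀ = frobSq M := by
  simp only [frobSq, Matrix.transpose_apply]; exact Finset.sum_comm

lemma nuclearNorm_nonneg {m n : ℕ} (Z : Matrix (Fin m) (Fin n) ℝ) : 0 ≤ nuclearNorm Z :=
  Finset.sum_nonneg fun _ _ => Real.sqrt_nonneg _

lemma psd_trace_nonneg {k : ℕ} {M : Matrix (Fin k) (Fin k) ℝ} (hM : M.PosSemidef) :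
    0 ≤ M.trace := by
  refine Finset.sum_nonneg fun i _ => ?_
  have := hM.2 (Finsupp.single i 1)
  simpa using this

lemma psd_trace_mul_nonneg {k : ℕ} {S T : Matrix (Fin k) (Fin k) ℝ}
    (hS : S.PosSemidef) (hT : T.PosSemidef) : 0 ≤ (S * T).trace := by
  obtain ⟨C, hC⟩ : ∃ C : Matrix (Fin k) (Fin k) ℝ, S = Cᵀ * C := by
    classical
    open scoped MatrixOrder in
    obtain ⟨X, hX, -, hXX⟩ := CFC.exists_sqrt_of_isSelfAdjoint_of_quasispectrumRestricts
      hS.isHermitian (QuasispectrumRestricts.nnreal_of_nonneg hS.nonneg)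
    have h2 : Xᵀ = X := by
      simpa [Matrix.star_eq_conjTranspose, Matrix.conjTranspose_eq_transpose_of_trivial] using hX.star_eq
    exact ⟨X, by rw [h2, hXX]⟩
  rw [hC, Matrix.mul_assoc, Matrix.trace_mul_comm]
  have := hT.mul_mul_conjTranspose_same C
  exact psd_trace_nonneg (by simpa [Matrix.mul_assoc] using this)

section Setup
variable {m n : ℕ} (Z : Matrix (Fin m) (Fin n) ℝ)

def Dz : Fin n → ℝ := (Matrix.isHermitian_conjTranspose_mul_self Z).eigenvalues
def Vz : Matrix (Fin n) (Fin n) ℝ := (Matrix.isHermitian_conjTranspose_mul_self Z).eigenvectorUnitary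
def Wz : Matrix (Fin m) (Fin n) ℝ := Z * Vz Z

lemma Dz_nonneg (i : Fin n) : 0 ≤ Dz Z i :=
  (Matrix.posSemidef_conjTranspose_mul_self Z).eigenvalues_nonneg i

lemma Vz_mul_transpose : Vz Z * (Vz Z)ᵀ = 1 := by
  have h := Matrix.mem_unitaryGroup_iff.mp
    ((Matrix.isHermitian_conjTranspose_mul_self Z).eigenvectorUnitary).2
  simpa [Matrix.star_eq_conjTranspose, Matrix.conjTranspose_eq_transpose_of_trivial, Vz] using h

lemma transpose_mul_Vz : (Vz Z)ᵀ * Vz Z = 1 := by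
  have h := Matrix.mem_unitaryGroup_iff'.mp
    ((Matrix.isHermitian_conjTranspose_mul_self Z).eigenvectorUnitary).2
  simpa [Matrix.star_eq_conjTranspose, Matrix.conjTranspose_eq_transpose_of_trivial, Vz] using h

lemma Wz_transpose_mul : (Wz Z)ᵀ * Wz Z = Matrix.diagonal (Dz Z) := by
  have h := (Matrix.isHermitian_conjTranspose_mul_self Z).conjStarAlgAut_star_eigenvectorUnitary
  rw [Unitary.conjStarAlgAut_star_apply] at h
  have h2 : (Vz Z)ᵀ * (Zᵀ * Z) * Vz Z = Matrix.diagonal (Dz Z) := by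
    simpa [Matrix.star_eq_conjTranspose, Matrix.conjTranspose_eq_transpose_of_trivial,
      Vz, Dz, Function.comp] using h
  calc (Wz Z)ᵀ * Wz Z = (Vz Z)ᵀ * (Zᵀ * Z) * Vz Z := by
        simp [Wz, Matrix.transpose_mul, Matrix.mul_assoc]
    _ = Matrix.diagonal (Dz Z) := h2

lemma Z_eq_Wz_mul : Wz Z * (Vz Z)ᵀ = Z := by
  rw [Wz, Matrix.mul_assoc, Vz_mul_transpose, Matrix.mul_one]

lemma Wz_col_eq_zero {i : Fin n} (hD : Dz Z i = 0) (j : Fin m) : Wz Z j i = 0 := by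
  have h := congrFun (congrFun (Wz_transpose_mul Z) i) i
  simp only [Matrix.mul_apply, Matrix.transpose_apply, Matrix.diagonal_apply_eq, hD] at h
  have h' : ∑ j, (Wz Z j i) ^ 2 = 0 := by rw [← h]; exact Finset.sum_congr rfl fun _ _ => sq (Wz Z _ i)
  have := (Finset.sum_eq_zero_iff_of_nonneg (fun j _ => sq_nonneg (Wz Z j i))).mp h' j
    (Finset.mem_univ j)
  exact pow_eq_zero_iff (two_ne_zero) |>.mp this

lemma Wz_mul_indicator : Wz Z * Matrix.diagonal (fun i => if Dz Z i = 0 then 0 else (1:ℝ)) = Wz Z := by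
  ext j i
  rw [Matrix.mul_diagonal]
  by_cases h : Dz Z i = 0
  · simp [h, Wz_col_eq_zero Z h j]
  · simp [h]

lemma nuclearNorm_eq_sum : nuclearNorm Z = ∑ i, Real.sqrt (Dz Z i) := rfl

end Setup
lemma trace_transpose_mul_le {p q : ℕ} (C E : Matrix (Fin p) (Fin q) ℝ) :
    (Cᵀ * E).trace ≤ (frobSq C + frobSq E) / 2 := by
  have h : (Cᵀ * E).trace = ∑ i, ∑ j, C i j * E i j := by
    simp only [Matrix.trace, Matrix.diag, Matrix.mul_apply, Matrix.transpose_apply]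
    exact Finset.sum_comm
  rw [h]
  have hle : ∀ i ∈ Finset.univ (α := Fin p), ∑ j, C i j * E i j ≤
      ∑ j, ((C i j) ^ 2 + (E i j) ^ 2) / 2 := by
    intro i _
    refine Finset.sum_le_sum fun j _ => ?_
    nlinarith [sq_nonneg (C i j - E i j)]
  refine (Finset.sum_le_sum hle).trans_eq ?_
  rw [frobSq, frobSq, ← Finset.sum_add_distrib, Finset.sum_div]
  refine Finset.sum_congr rfl fun i _ => ?_
  rw [← Finset.sum_add_distrib, ← Finset.sum_div]

lemma nuclear_le {m n r : ℕ} (A : Matrix (Fin m) (Fin r) ℝ) (B : Matrix (Fin n) (Fin r) ℝ) :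
    nuclearNorm (A * Bᵀ) ≤ (frobSq A + frobSq B) / 2 := by
  set Z := A * Bᵀ with hZdef
  set D := Dz Z with hDdef
  set V := Vz Z with hVdef
  set W := Wz Z with hWdef
  have hDpos : ∀ i, D i ≠ 0 → 0 < Real.sqrt (D i) := fun i h =>
    Real.sqrt_pos.mpr (lt_of_le_of_ne (Dz_nonneg Z i) (Ne.symm h))
  set t : Fin n → ℝ := fun i => if D i = 0 then 0 else (Real.sqrt (D i))⁻¹ with ht
  set U : Matrix (Fin m) (Fin n) ℝ := W * Matrix.diagonal t with hU
  set χ : Fin n → ℝ := fun i => if D i = 0 then 0 else 1 with hχ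
  have hWW : Wᵀ * W = Matrix.diagonal D := Wz_transpose_mul Z
  have hVV' : V * Vᵀ = 1 := Vz_mul_transpose Z
  have hZV : Z * V = W := rfl
  have hsq : ∀ i, Real.sqrt (D i) * Real.sqrt (D i) = D i := fun i =>
    Real.mul_self_sqrt (Dz_nonneg Z i)
  have hUχ : U * Matrix.diagonal χ = U := by
    rw [hU, Matrix.mul_assoc, Matrix.diagonal_mul_diagonal,
      show (fun i => t i * χ i) = t from funext fun i => by
        by_cases h : D i = 0 <;> simp [ht, hχ, h]]
  have hUU : Uᵀ * U = Matrix.diagonal χ := by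
    have e : Uᵀ * U = Matrix.diagonal t * (Wᵀ * W) * Matrix.diagonal t := by
      rw [hU, Matrix.transpose_mul, Matrix.diagonal_transpose]
      simp only [Matrix.mul_assoc]
    rw [e, hWW, Matrix.diagonal_mul_diagonal, Matrix.diagonal_mul_diagonal]
    refine congrArg _ (funext fun i => ?_)
    by_cases h : D i = 0
    · simp [ht, hχ, h]
    · have hs' : Real.sqrt (D i) ≠ 0 := (hDpos i h).ne'
      simp only [ht, hχ, if_neg h]
      field_simp
      exact (Real.sq_sqrt (Dz_nonneg Z i)).symm
  have key : Uᵀ * Z * V = Matrix.diagonal (fun i => Real.sqrt (D i)) := by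
    have e : Uᵀ * Z * V = Matrix.diagonal t * (Wᵀ * (Z * V)) := by
      rw [hU, Matrix.transpose_mul, Matrix.diagonal_transpose]
      simp only [Matrix.mul_assoc]
    rw [e, hZV, hWW, Matrix.diagonal_mul_diagonal]
    refine congrArg _ (funext fun i => ?_)
    by_cases h : D i = 0
    · simp [ht, h]
    · have hs' : Real.sqrt (D i) ≠ 0 := (hDpos i h).ne'
      simp only [ht, if_neg h]
      field_simp
      exact (Real.sq_sqrt (Dz_nonneg Z i)).symm
  have h1 : nuclearNorm Z = ((Aᵀ * U)ᵀ * (Bᵀ * V)).trace := by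
    have he : (Aᵀ * U)ᵀ * (Bᵀ * V) = Uᵀ * Z * V := by
      rw [Matrix.transpose_mul, Matrix.transpose_transpose, hZdef]
      simp only [Matrix.mul_assoc]
    rw [he, key, Matrix.trace_diagonal, nuclearNorm_eq_sum]
  have h3 : frobSq (Bᵀ * V) = frobSq B := by
    rw [frobSq_eq_trace, Matrix.transpose_mul, Matrix.transpose_transpose]
    have he : Vᵀ * B * (Bᵀ * V) = Vᵀ * (B * Bᵀ) * V := by simp only [Matrix.mul_assoc]
    rw [he, Matrix.trace_mul_cycle, ← Matrix.mul_assoc, hVV', Matrix.one_mul]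
    rw [show B * Bᵀ = (Bᵀ)ᵀ * Bᵀ by rw [Matrix.transpose_transpose], ← frobSq_eq_trace,
      frobSq_transpose]
  have h4 : frobSq (Aᵀ * U) ≤ frobSq A := by
    rw [frobSq_eq_trace, Matrix.transpose_mul, Matrix.transpose_transpose]
    have he : Uᵀ * A * (Aᵀ * U) = Uᵀ * (A * Aᵀ) * U := by simp only [Matrix.mul_assoc]
    rw [he, Matrix.trace_mul_cycle]
    set M := U * Uᵀ with hM
    set S := A * Aᵀ with hS
    have hMsymm : Mᵀ = M := by rw [hM, Matrix.transpose_mul, Matrix.transpose_transpose]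
    have hMM : M * M = M := by
      rw [hM, Matrix.mul_assoc, ← Matrix.mul_assoc Uᵀ, hUU, ← Matrix.mul_assoc, hUχ]
    have hexp : (1 - M) * (1 - M) = 1 - M := by
      rw [Matrix.sub_mul, Matrix.mul_sub, Matrix.mul_sub, hMM]
      simp
    have hPSD1 : (1 - M).PosSemidef := by
      have he2 : (1 - M) = (1 - M)ᴴ * (1 - M) := by
        rw [Matrix.conjTranspose_eq_transpose_of_trivial, Matrix.transpose_sub,
          Matrix.transpose_one, hMsymm, hexp]
      rw [he2]
      exact Matrix.posSemidef_conjTranspose_mul_self _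
    have hPSD2 : S.PosSemidef := by
      have := Matrix.posSemidef_self_mul_conjTranspose A
      simpa [Matrix.conjTranspose_eq_transpose_of_trivial] using this
    have htr := psd_trace_mul_nonneg hPSD1 hPSD2
    rw [Matrix.sub_mul, Matrix.one_mul, Matrix.trace_sub] at htr
    have hfS : frobSq A = S.trace := by
      rw [hS, show A * Aᵀ = (Aᵀ)ᵀ * Aᵀ by rw [Matrix.transpose_transpose], ← frobSq_eq_trace,
        frobSq_transpose]
    rw [hfS]
    linarith [htr]
  calc nuclearNorm Z = ((Aᵀ * U)ᵀ * (Bᵀ * V)).trace := h1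
    _ ≤ (frobSq (Aᵀ * U) + frobSq (Bᵀ * V)) / 2 := trace_transpose_mul_le _ _
    _ ≤ (frobSq A + frobSq B) / 2 := by rw [h3]; linarith [h4]
lemma exists_factor {m n r : ℕ} (Z : Matrix (Fin m) (Fin n) ℝ) (hrank : Z.rank ≤ r) :
    ∃ (A : Matrix (Fin m) (Fin r) ℝ) (B : Matrix (Fin n) (Fin r) ℝ),
      A * Bᵀ = Z ∧ frobSq A = nuclearNorm Z ∧ frobSq B = nuclearNorm Z := by
  classical
  set D := Dz Z with hDdef
  set V := Vz Z with hVdef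
  set W := Wz Z with hWdef
  have hcard : Fintype.card {i // D i ≠ 0} ≤ Fintype.card (Fin r) := by
    have h1 : Z.rank = Fintype.card {i // D i ≠ 0} := by
      rw [← Matrix.rank_conjTranspose_mul_self Z]
      exact (Matrix.isHermitian_conjTranspose_mul_self Z).rank_eq_card_non_zero_eigs
    rw [Fintype.card_fin, ← h1]
    exact hrank
  obtain ⟨f⟩ := Function.Embedding.nonempty_of_card_le hcard
  set χ : Fin n → ℝ := fun i => if D i = 0 then 0 else 1 with hχ
  set s : Fin n → ℝ := fun i => Real.sqrt (Real.sqrt (D i)) with hs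
  set t : Fin n → ℝ := fun i => if D i = 0 then 0 else (s i)⁻¹ with ht
  set P : Matrix (Fin n) (Fin r) ℝ :=
    fun i k => if h : D i ≠ 0 then (if f ⟨i, h⟩ = k then (1:ℝ) else 0) else 0 with hP
  have hWW : Wᵀ * W = Matrix.diagonal D := Wz_transpose_mul Z
  have hVV : Vᵀ * V = 1 := transpose_mul_Vz Z
  have hWχ : W * Matrix.diagonal χ = W := Wz_mul_indicator Z
  have hZW : W * Vᵀ = Z := Z_eq_Wz_mul Z
  have hDnn : ∀ i, 0 ≤ D i := Dz_nonneg Z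
  have hspos : ∀ i, D i ≠ 0 → 0 < s i := by
    intro i h
    exact Real.sqrt_pos.mpr (Real.sqrt_pos.mpr (lt_of_le_of_ne (hDnn i) (Ne.symm h)))
  have hss : ∀ i, s i * s i = Real.sqrt (D i) := fun i =>
    Real.mul_self_sqrt (Real.sqrt_nonneg _)
  -- P * Pᵀ = diagonal χ
  have hPP : P * Pᵀ = Matrix.diagonal χ := by
    ext i j
    rw [Matrix.mul_apply]
    by_cases hij : i = j
    · subst hij
      rw [Matrix.diagonal_apply_eq]
      by_cases h : D i = 0
      · simp [hP, hχ, h]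
      · have : ∀ k, P i k * P i k = if f ⟨i, h⟩ = k then (1:ℝ) else 0 := by
          intro k
          simp only [hP, Matrix.transpose_apply, dif_pos (h : D i ≠ 0)]
          split_ifs <;> ring
        simp only [Matrix.transpose_apply]
        rw [Finset.sum_congr rfl fun k _ => this k]
        simp [hχ, h]
    · rw [Matrix.diagonal_apply_ne _ hij]
      refine Finset.sum_eq_zero fun k _ => ?_
      simp only [Matrix.transpose_apply]
      simp only [hP]
      by_cases hi : D i ≠ 0
      · by_cases hj : D j ≠ 0
        · rw [dif_pos hi, dif_pos hj]
          split_ifs with h1 h2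
          · exfalso
            exact hij (congrArg Subtype.val (f.injective (h1.trans h2.symm)))
          all_goals ring
        · rw [dif_neg hj]; ring
      · rw [dif_neg hi]; ring
  set A : Matrix (Fin m) (Fin r) ℝ := W * Matrix.diagonal t * P with hA
  set B : Matrix (Fin n) (Fin r) ℝ := V * Matrix.diagonal s * P with hB
  refine ⟨A, B, ?_, ?_, ?_⟩
  · -- A * Bᵀ = Z
    have e : A * Bᵀ = W * (Matrix.diagonal t * (P * Pᵀ) * Matrix.diagonal s) * Vᵀ := by
      rw [hA, hB, Matrix.transpose_mul, Matrix.transpose_mul, Matrix.diagonal_transpose]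
      simp only [Matrix.mul_assoc]
    rw [e, hPP, Matrix.diagonal_mul_diagonal, Matrix.diagonal_mul_diagonal]
    have hfun : (fun i => t i * χ i * s i) = χ := by
      funext i
      by_cases h : D i = 0
      · simp [ht, hχ, h]
      · simp only [ht, hχ, if_neg h]
        field_simp
        exact div_self (hspos i h).ne'
    rw [hfun, hWχ, hZW]
  · -- frobSq A = nuclearNorm Z
    rw [frobSq_eq_trace]
    have e : Aᵀ * A = Pᵀ * (Matrix.diagonal t * (Wᵀ * W) * Matrix.diagonal t) * P := by
      rw [hA, Matrix.transpose_mul, Matrix.transpose_mul, Matrix.diagonal_transpose]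
      simp only [Matrix.mul_assoc]
    rw [e, hWW, Matrix.diagonal_mul_diagonal, Matrix.diagonal_mul_diagonal,
      Matrix.trace_mul_cycle, hPP, Matrix.diagonal_mul_diagonal, Matrix.trace_diagonal,
      nuclearNorm_eq_sum]
    refine Finset.sum_congr rfl fun i _ => ?_
    have hDz : ∀ j, Dz Z j = D j := fun _ => rfl
    by_cases h : D i = 0
    · have h0 : Real.sqrt (Dz Z i) = 0 := by rw [hDz i, h, Real.sqrt_zero]
      simp [hχ, ht, h, h0]
    · have hsne : s i ≠ 0 := (hspos i h).ne'
      simp only [hχ, ht, if_neg h, one_mul]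
      have he2 : (s i)⁻¹ * D i * (s i)⁻¹ = D i / (s i * s i) := by
        field_simp
      rw [he2, hss i, hDz i, Real.div_sqrt]
  · -- frobSq B = nuclearNorm Z
    rw [frobSq_eq_trace]
    have e : Bᵀ * B = Pᵀ * (Matrix.diagonal s * (Vᵀ * V) * Matrix.diagonal s) * P := by
      rw [hB, Matrix.transpose_mul, Matrix.transpose_mul, Matrix.diagonal_transpose]
      simp only [Matrix.mul_assoc]
    rw [e, hVV, Matrix.mul_one, Matrix.diagonal_mul_diagonal,
      Matrix.trace_mul_cycle, hPP, Matrix.diagonal_mul_diagonal, Matrix.trace_diagonal,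
      nuclearNorm_eq_sum]
    refine Finset.sum_congr rfl fun i _ => ?_
    have hDz : ∀ j, Dz Z j = D j := fun _ => rfl
    by_cases h : D i = 0
    · have h0 : Real.sqrt (Dz Z i) = 0 := by rw [hDz i, h, Real.sqrt_zero]
      simp [hχ, h, h0]
    · simp only [hχ, if_neg h, one_mul]
      rw [hDz i]
      exact hss i
theorem inf_factorization_eq_inf_rank_restricted {m n r : ℕ} (hr0 : 0 < r)
    (hr : r ≤ min m n) (X : Matrix (Fin m) (Fin n) ℝ) (lam : ℝ) (hlam : 0 ≤ lam) :
    sInf {c : ℝ | ∃ A : Matrix (Fin m) (Fin r) ℝ, ∃ B : Matrix (Fin n) (Fin r) ℝ,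
        c = (1 / 2) * frobSq (X - A * Bᵀ) + (lam / 2) * (frobSq A + frobSq B)} =
    sInf {c : ℝ | ∃ Z : Matrix (Fin m) (Fin n) ℝ, Z.rank ≤ r ∧
        c = (1 / 2) * frobSq (X - Z) + lam * nuclearNorm Z} := by
  have hne1 : {c : ℝ | ∃ A : Matrix (Fin m) (Fin r) ℝ, ∃ B : Matrix (Fin n) (Fin r) ℝ,
      c = (1 / 2) * frobSq (X - A * Bᵀ) + (lam / 2) * (frobSq A + frobSq B)}.Nonempty :=
    ⟨_, 0, 0, rfl⟩
  have hne2 : {c : ℝ | ∃ Z : Matrix (Fin m) (Fin n) ℝ, Z.rank ≤ r ∧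
      c = (1 / 2) * frobSq (X - Z) + lam * nuclearNorm Z}.Nonempty :=
    ⟨_, 0, by rw [Matrix.rank_zero]; exact Nat.zero_le r, rfl⟩
  have hbdd1 : BddBelow {c : ℝ | ∃ A : Matrix (Fin m) (Fin r) ℝ,
      ∃ B : Matrix (Fin n) (Fin r) ℝ,
      c = (1 / 2) * frobSq (X - A * Bᵀ) + (lam / 2) * (frobSq A + frobSq B)} := by
    refine ⟨0, fun c hc => ?_⟩
    obtain ⟨A, B, rfl⟩ := hc
    have h1 := frobSq_nonneg (X - A * Bᵀ)
    have h2 := frobSq_nonneg A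
    have h3 := frobSq_nonneg B
    nlinarith
  have hbdd2 : BddBelow {c : ℝ | ∃ Z : Matrix (Fin m) (Fin n) ℝ, Z.rank ≤ r ∧
      c = (1 / 2) * frobSq (X - Z) + lam * nuclearNorm Z} := by
    refine ⟨0, fun c hc => ?_⟩
    obtain ⟨Z, _, rfl⟩ := hc
    have h1 := frobSq_nonneg (X - Z)
    have h2 := nuclearNorm_nonneg Z
    nlinarith
  apply le_antisymm
  · refine le_csInf hne2 fun c hc => ?_
    obtain ⟨Z, hZr, rfl⟩ := hc
    obtain ⟨A, B, hAB, hfA, hfB⟩ := exists_factor Z hZr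
    refine csInf_le hbdd1 ⟨A, B, ?_⟩
    rw [hAB, hfA, hfB]
    ring
  · refine le_csInf hne1 fun c hc => ?_
    obtain ⟨A, B, rfl⟩ := hc
    have hrank : (A * Bᵀ).rank ≤ r := by
      refine (Matrix.rank_mul_le_left A Bᵀ).trans ?_
      simpa using Matrix.rank_le_card_width A
    refine csInf_le_of_le hbdd2 ⟨A * Bᵀ, hrank, rfl⟩ ?_
    have hnl := nuclear_le A B
    have := mul_le_mul_of_nonneg_left hnl hlam
    nlinarith

end
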